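/- Let T : (0,1) → (0,1) be a Markov map with countably many full branches satisfying (A1)-(A4), preserving an infinite absolutely continuous measure μ with μ([a,1)) < ∞ for all a ∈ (0,1) and μ((0,a)) = ∞. Then for every n ∈ ℕ, lim_{a→0⁺} μ(T^{-n}[a,1) Δ [a,1)) / μ([a,1)) = 0. -/

import Mathlib

open MeasureTheory Filter Set

theorem stmt_10
    (T : ℝ → ℝ) (a : ℕ → ℝ) (φ : ℕ → ℝ → ℝ)
    (ha0 : a 0 = 0) (ha_mono : StrictMono a) (ha_lim : Tendsto a atTop (nhds 1))
    -- (A1): each branch extends to a C² bijection onto [0,1]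
    (hφ_smooth : ∀ j, ContDiffOn ℝ 2 (φ j) (Icc (a j) (a (j + 1))))
    (hφ_bij : ∀ j, BijOn (φ j) (Icc (a j) (a (j + 1))) (Icc 0 1))
    (hTφ : ∀ j, ∀ x ∈ Ioo (a j) (a (j + 1)), T x = φ j x)
    -- (A2): uniform expansion away from the fixed point
    (Λ : ℝ) (hΛ : 1 < Λ)
    (hA2 : ∀ j ≥ 1, ∀ x ∈ Icc (a j) (a (j + 1)), Λ ≤ |deriv (φ j) x|)
    -- (A3): bounded distortion
    (K : ℝ) (hK : 0 < K)
    (hA3 : ∀ j, ∀ x ∈ Icc (a j) (a (j + 1)),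
      |deriv (deriv (φ j)) x| ≤ K * (deriv (φ j) x) ^ 2)
    -- (A4): indifferent fixed point at 0
    (hA4_conv : ConvexOn ℝ (Icc (a 0) (a 1)) (φ 0))
    (hA4_fix : φ 0 0 = 0) (hA4_der : deriv (φ 0) 0 = 1)
    (hA4_exp : ∀ x ∈ Ioc (0:ℝ) (a 1), 1 < deriv (φ 0) x)
    -- the invariant measure
    (μ : Measure ℝ) (hμ_ac : μ ≪ volume) (hμ_inv : MeasurePreserving T μ μ)
    (hμ_fin : ∀ c ∈ Ioo (0:ℝ) 1, μ (Ico c 1) < ⊤)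
    (hμ_inf : ∀ c ∈ Ioo (0:ℝ) 1, μ (Ioo 0 c) = ⊤) :
    ∀ n : ℕ,
      Tendsto (fun c : ℝ => μ (symmDiff ((T^[n]) ⁻¹' (Ico c 1)) (Ico c 1)) / μ (Ico c 1))
        (nhdsWithin 0 (Ioi 0)) (nhds 0) := by
  classical
  -- basic facts about the partition points
  have ha1pos : 0 < a 1 := ha0 ▸ ha_mono (by norm_num)
  have ha_le : ∀ j, a j ≤ 1 := fun j => ha_mono.monotone.ge_of_tendsto ha_lim j
  have ha1lt : a 1 < 1 := lt_of_lt_of_le (ha_mono (by norm_num : (1:ℕ) < 2)) (ha_le 2)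
  -- smoothness of φ 0 on [0, a 1]
  have h0s : ContDiffOn ℝ 2 (φ 0) (Icc 0 (a 1)) := by
    have := hφ_smooth 0; rwa [ha0] at this
  have h0c : ContinuousOn (φ 0) (Icc 0 (a 1)) := h0s.continuousOn
  have hdiff0 : ∀ y ∈ Ioo (0:ℝ) (a 1), DifferentiableAt ℝ (φ 0) y := by
    intro y hy
    have hnhds : Icc (0:ℝ) (a 1) ∈ nhds y := Icc_mem_nhds hy.1 hy.2
    exact (h0s.differentiableOn (by norm_num)).differentiableAt hnhds
  -- φ 0 x > x on (0, a 1)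
  have hφ0_gt : ∀ x ∈ Ioo (0:ℝ) (a 1), x < φ 0 x := by
    intro x hx
    obtain ⟨ξ, hξ, hslope⟩ := exists_deriv_eq_slope (φ 0) hx.1
      (h0c.mono (Icc_subset_Icc le_rfl hx.2.le))
      (fun y hy => (hdiff0 y ⟨hy.1, hy.2.trans hx.2⟩).differentiableWithinAt)
    have hd := hA4_exp ξ ⟨hξ.1, (hξ.2.trans hx.2).le⟩
    rw [hslope, hA4_fix, sub_zero, sub_zero] at hd
    exact (one_lt_div hx.1).mp hd
  -- φ 0 x < 1 on (0, a 1)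
  have hφ0_lt1 : ∀ x ∈ Ioo (0:ℝ) (a 1), φ 0 x < 1 := by
    intro x hx
    obtain ⟨ξ, hξ, hslope⟩ := exists_deriv_eq_slope (φ 0) hx.2
      (h0c.mono (Icc_subset_Icc hx.1.le le_rfl))
      (fun y hy => (hdiff0 y ⟨hx.1.trans hy.1, hy.2⟩).differentiableWithinAt)
    have hd := hA4_exp ξ ⟨hx.1.trans hξ.1, hξ.2.le⟩
    rw [hslope] at hd
    have hsub : 0 < a 1 - x := sub_pos.2 hx.2
    have h1 : a 1 - x < φ 0 (a 1) - φ 0 x := (one_lt_div hsub).mp hd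
    have h2 : φ 0 (a 1) ≤ 1 := by
      have hmem : a 1 ∈ Icc (a 0) (a (0 + 1)) := ⟨(ha_mono Nat.zero_lt_one).le, le_rfl⟩
      exact ((hφ_bij 0).mapsTo hmem).2
    linarith
  -- null set of exceptional points
  set N : Set ℝ := range a ∪ ((⋃ j, {x ∈ Icc (a j) (a (j+1)) | φ j x = 1}) ∪
      (⋃ j, {x ∈ Icc (a j) (a (j+1)) | φ j x = 0})) with hN_def
  have hNc : N.Countable := by
    refine (countable_range a).union (Countable.union ?_ ?_) <;>
    · refine countable_iUnion (fun j => Set.Subsingleton.countable ?_)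
      intro x hx y hy
      exact (hφ_bij j).injOn hx.1 hy.1 (hx.2.trans hy.2.symm)
  have hNμ : μ N = 0 := hμ_ac (hNc.measure_zero volume)
  -- locating points of [a 1, 1) in the interior of a branch
  have hloc : ∀ x ∈ Ico (a 1) (1:ℝ), x ∉ range a →
      ∃ j, 1 ≤ j ∧ x ∈ Ioo (a j) (a (j+1)) := by
    intro x hx hxr
    have hex : ∃ j, x < a j := by
      by_contra h
      push_neg at h
      have : (1:ℝ) ≤ x := le_of_tendsto ha_lim (Eventually.of_forall h)
      exact absurd hx.2 (not_lt.2 this)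
    have hj : x < a (Nat.find hex) := Nat.find_spec hex
    have hj0 : Nat.find hex ≠ 0 := by
      intro h
      rw [h, ha0] at hj
      exact absurd hj (not_lt.2 (le_trans ha1pos.le hx.1))
    obtain ⟨k, hk⟩ := Nat.exists_eq_succ_of_ne_zero hj0
    have hk_le : a k ≤ x := not_lt.1 (Nat.find_min hex (by rw [hk]; exact Nat.lt_succ_self k))
    have hk_lt : a k < x := lt_of_le_of_ne hk_le (fun h => hxr ⟨k, h⟩)
    have hk1 : 1 ≤ k := by
      by_contra h
      push_neg at h
      have : k = 0 := Nat.lt_one_iff.1 h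
      rw [this] at hk
      rw [hk] at hj
      exact absurd hj (not_lt.2 hx.1)
    rw [hk] at hj
    exact ⟨k, hk1, hk_lt, hj⟩
  -- abbreviation for the "small" set
  set S : ℝ → Set ℝ := fun c => Ico (a 1) 1 ∩ T ⁻¹' (Iio c) with hS_def
  have hSsub : ∀ c, S c ⊆ Ico (a 1) 1 := fun c => inter_subset_left
  have hSmeas : ∀ c, MeasurableSet (S c) :=
    fun c => measurableSet_Ico.inter (hμ_inv.measurable measurableSet_Iio)
  have hIcofin : μ (Ico (a 1) 1) ≠ ⊤ := (hμ_fin (a 1) ⟨ha1pos, ha1lt⟩).ne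
  -- the key containment for one step of T
  have hBA : ∀ c ∈ Ioo (0:ℝ) (a 1),
      Ico c 1 \ T ⁻¹' (Ico c 1) ⊆ S c ∪ N := by
    intro c hc x hx
    obtain ⟨⟨hcx, hx1⟩, hTx⟩ := hx
    rw [mem_preimage, mem_Ico, not_and_or, not_le, not_lt] at hTx
    by_cases hxa1 : x < a 1
    · exfalso
      have hx0 : x ∈ Ioo (0:ℝ) (a 1) := ⟨lt_of_lt_of_le hc.1 hcx, hxa1⟩
      have hTeq : T x = φ 0 x := by
        apply hTφ 0 x
        rwa [ha0]
      rcases hTx with h | h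
      · rw [hTeq] at h
        exact absurd (le_trans hcx (hφ0_gt x hx0).le) (not_le.2 h)
      · rw [hTeq] at h
        exact absurd (hφ0_lt1 x hx0) (not_lt.2 h)
    · push_neg at hxa1
      by_cases hxN : x ∈ N
      · exact Or.inr hxN
      · left
        refine ⟨⟨hxa1, hx1⟩, ?_⟩
        have hxr : x ∉ range a := fun h => hxN (Or.inl h)
        obtain ⟨j, hj1, hxj⟩ := hloc x ⟨hxa1, hx1⟩ hxr
        have hTeq := hTφ j x hxj
        have hm := (hφ_bij j).mapsTo (Ioo_subset_Icc_self hxj)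
        have hne1 : φ j x ≠ 1 := by
          intro h
          exact hxN (Or.inr (Or.inl (mem_iUnion.2 ⟨j, Ioo_subset_Icc_self hxj, h⟩)))
        have hlt1 : T x < 1 := by
          rw [hTeq]
          exact lt_of_le_of_ne hm.2 hne1
        rcases hTx with h | h
        · exact h
        · exact absurd hlt1 (not_lt.2 h)
  -- μ (S c) → 0 as c → 0⁺
  have hInter : (⋂ n : ℕ, S (1 / ((n:ℝ)+1))) ⊆ N := by
    intro x hx
    simp only [mem_iInter] at hx
    by_contra hxN
    have hxI : x ∈ Ico (a 1) 1 := (hx 0).1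
    have hTx_le : T x ≤ 0 := by
      by_contra h
      push_neg at h
      obtain ⟨n, hn⟩ := exists_nat_one_div_lt h
      exact absurd ((hx n).2 : T x < 1 / ((n:ℝ)+1)) (not_lt.2 hn.le)
    have hxr : x ∉ range a := fun h => hxN (Or.inl h)
    obtain ⟨j, hj1, hxj⟩ := hloc x hxI hxr
    have hm := (hφ_bij j).mapsTo (Ioo_subset_Icc_self hxj)
    have hTeq := hTφ j x hxj
    have h0 : φ j x = 0 := le_antisymm (by rw [← hTeq]; exact hTx_le) hm.1
    exact hxN (Or.inr (Or.inr (mem_iUnion.2 ⟨j, Ioo_subset_Icc_self hxj, h0⟩)))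
  have hStend : Tendsto (fun c => μ (S c)) (nhdsWithin 0 (Ioi 0)) (nhds 0) := by
    rw [ENNReal.tendsto_nhds_zero]
    intro ε hε
    have hanti : Antitone (fun n : ℕ => S (1 / ((n:ℝ)+1))) := by
      intro m n hmn
      apply inter_subset_inter_right
      apply preimage_mono
      apply Iio_subset_Iio
      apply one_div_le_one_div_of_le
      · positivity
      · exact add_le_add_left (Nat.cast_le.2 hmn) 1
    have h1 : Tendsto (fun n : ℕ => μ (S (1 / ((n:ℝ)+1)))) atTop
        (nhds (μ (⋂ n : ℕ, S (1 / ((n:ℝ)+1))))) := by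
      exact tendsto_measure_iInter_atTop (fun n => (hSmeas _).nullMeasurableSet) hanti
        ⟨0, ne_top_of_le_ne_top hIcofin (measure_mono (hSsub _))⟩
    have h2 : μ (⋂ n : ℕ, S (1 / ((n:ℝ)+1))) = 0 :=
      le_antisymm (le_trans (measure_mono hInter) hNμ.le) (zero_le)
    rw [h2] at h1
    obtain ⟨n, hn⟩ := (ENNReal.tendsto_nhds_zero.mp h1 ε hε).exists
    have hmem : Ioo (0:ℝ) (1 / ((n:ℝ)+1)) ∈ nhdsWithin 0 (Ioi 0) :=
      Ioo_mem_nhdsGT (by positivity)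
    filter_upwards [hmem] with c hc
    refine le_trans (measure_mono ?_) hn
    exact inter_subset_inter_right _ (preimage_mono (Iio_subset_Iio hc.2.le))
  -- measure of the one-step symmetric difference
  have hμA : ∀ c : ℝ, μ (T ⁻¹' (Ico c 1)) = μ (Ico c 1) :=
    fun c => hμ_inv.measure_preimage measurableSet_Ico.nullMeasurableSet
  have hΔ1 : ∀ c ∈ Ioo (0:ℝ) (a 1),
      μ (symmDiff (T ⁻¹' (Ico c 1)) (Ico c 1)) ≤ 2 * μ (S c) := by
    intro c hc
    set A := T ⁻¹' (Ico c 1) with hA_def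
    set B := Ico c (1:ℝ) with hB_def
    have hBfin : μ B ≠ ⊤ := (hμ_fin c ⟨hc.1, hc.2.trans ha1lt⟩).ne
    have hABfin : μ (A ∩ B) ≠ ⊤ := ne_top_of_le_ne_top hBfin (measure_mono inter_subset_right)
    have hABnm : NullMeasurableSet (A ∩ B) μ :=
      ((hμ_inv.measurable measurableSet_Ico).inter measurableSet_Ico).nullMeasurableSet
    have hBA' : μ (B \ A) ≤ μ (S c) := by
      calc μ (B \ A) ≤ μ (S c ∪ N) := measure_mono (hBA c hc)
        _ ≤ μ (S c) + μ N := measure_union_le _ _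
        _ = μ (S c) := by rw [hNμ, add_zero]
    have hAB : μ (A \ B) = μ (B \ A) := by
      have e1 : A \ B = A \ (A ∩ B) := (diff_self_inter).symm
      have e2 : B \ A = B \ (A ∩ B) := by rw [inter_comm, diff_self_inter]
      rw [e1, e2, measure_diff inter_subset_left hABnm hABfin,
        measure_diff inter_subset_right hABnm hABfin, hμA c]
    calc μ (symmDiff A B) ≤ μ (A \ B) + μ (B \ A) := by
          rw [Set.symmDiff_def]; exact measure_union_le _ _
      _ = 2 * μ (B \ A) := by rw [hAB]; ring
      _ ≤ 2 * μ (S c) := by gcongr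
  -- iterate bound by induction
  have hΔmeas : ∀ n : ℕ, ∀ c : ℝ,
      MeasurableSet (symmDiff ((T^[n]) ⁻¹' (Ico c 1)) (Ico c 1)) := by
    intro n c
    exact ((hμ_inv.measurable.iterate n) measurableSet_Ico).symmDiff measurableSet_Ico
  have hΔiter : ∀ n : ℕ, ∀ c : ℝ,
      μ (symmDiff ((T^[n]) ⁻¹' (Ico c 1)) (Ico c 1)) ≤
        (n : ENNReal) * μ (symmDiff (T ⁻¹' (Ico c 1)) (Ico c 1)) := by
    intro n
    induction n with
    | zero => intro c; simp
    | succ n ih =>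
      intro c
      have h1 : (T^[n+1]) ⁻¹' (Ico c 1) = T ⁻¹' ((T^[n]) ⁻¹' (Ico c 1)) := by
        rw [Function.iterate_succ, Set.preimage_comp]
      have key : symmDiff ((T^[n+1]) ⁻¹' (Ico c 1)) (Ico c 1) ⊆
          (T ⁻¹' (symmDiff ((T^[n]) ⁻¹' (Ico c 1)) (Ico c 1))) ∪
            symmDiff (T ⁻¹' (Ico c 1)) (Ico c 1) := by
        rw [h1, Set.preimage_symmDiff]
        exact symmDiff_triangle _ (T ⁻¹' (Ico c 1)) _
      calc μ (symmDiff ((T^[n+1]) ⁻¹' (Ico c 1)) (Ico c 1))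
          ≤ μ (T ⁻¹' (symmDiff ((T^[n]) ⁻¹' (Ico c 1)) (Ico c 1))) +
            μ (symmDiff (T ⁻¹' (Ico c 1)) (Ico c 1)) :=
            le_trans (measure_mono key) (measure_union_le _ _)
        _ = μ (symmDiff ((T^[n]) ⁻¹' (Ico c 1)) (Ico c 1)) +
            μ (symmDiff (T ⁻¹' (Ico c 1)) (Ico c 1)) := by
            rw [hμ_inv.measure_preimage (hΔmeas n c).nullMeasurableSet]
        _ ≤ (n : ENNReal) * μ (symmDiff (T ⁻¹' (Ico c 1)) (Ico c 1)) +
            μ (symmDiff (T ⁻¹' (Ico c 1)) (Ico c 1)) := add_le_add_left (ih c) _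
        _ = ((n + 1 : ℕ) : ENNReal) * μ (symmDiff (T ⁻¹' (Ico c 1)) (Ico c 1)) := by
            push_cast; ring
  -- conclusion
  intro n
  rcases eq_or_ne (μ (Ico (a 1) 1)) 0 with hm | hm
  · have hev : ∀ᶠ c in nhdsWithin 0 (Ioi 0),
        μ (symmDiff ((T^[n]) ⁻¹' (Ico c 1)) (Ico c 1)) / μ (Ico c 1) = 0 := by
      filter_upwards [Ioo_mem_nhdsGT ha1pos]
        with c hc
      have hS0 : μ (S c) = 0 :=
        le_antisymm (hm ▸ measure_mono (hSsub c)) (zero_le)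
      have hnum : μ (symmDiff ((T^[n]) ⁻¹' (Ico c 1)) (Ico c 1)) = 0 := by
        refine le_antisymm (le_trans (hΔiter n c) ?_) (zero_le)
        rw [show μ (symmDiff (T ⁻¹' (Ico c 1)) (Ico c 1)) = 0 from
          le_antisymm (le_trans (hΔ1 c hc) (by rw [hS0, mul_zero])) (zero_le), mul_zero]
      rw [hnum, ENNReal.zero_div]
    exact Tendsto.congr' (hev.mono fun c h => h.symm) tendsto_const_nhds
  · set m := μ (Ico (a 1) 1) with hm_def
    set C : ENNReal := 2 * (n : ENNReal) / m with hC_def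
    have hCne : C ≠ ⊤ := by
      refine (ENNReal.div_lt_top ?_ hm).ne
      exact ENNReal.mul_ne_top (by norm_num) (ENNReal.natCast_ne_top n)
    rw [ENNReal.tendsto_nhds_zero]
    intro ε hε
    have hupper : Tendsto (fun c => μ (S c) * C) (nhdsWithin 0 (Ioi 0)) (nhds 0) := by
      have := ENNReal.Tendsto.mul_const hStend (Or.inr hCne)
      rwa [zero_mul] at this
    have hev1 := ENNReal.tendsto_nhds_zero.mp hupper ε hε
    filter_upwards [hev1,
      Ioo_mem_nhdsGT ha1pos]
      with c hc1 hc2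
    refine le_trans ?_ hc1
    have hden : m ≤ μ (Ico c 1) := measure_mono (Ico_subset_Ico_left hc2.2.le)
    calc μ (symmDiff ((T^[n]) ⁻¹' (Ico c 1)) (Ico c 1)) / μ (Ico c 1)
        ≤ μ (symmDiff ((T^[n]) ⁻¹' (Ico c 1)) (Ico c 1)) / m :=
          ENNReal.div_le_div_left hden _
      _ ≤ ((n : ENNReal) * (2 * μ (S c))) / m :=
          ENNReal.div_le_div_right
            (le_trans (hΔiter n c) (by gcongr; exact hΔ1 c hc2)) m
      _ = μ (S c) * C := by
          rw [hC_def, ENNReal.div_eq_inv_mul, ENNReal.div_eq_inv_mul]; ring
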